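/- Let Q₁=(1,1,1,1,1,1,1), Q₂=(1,1,0,1,0,0,0), Q₃=(1,0,1,0,1,0,0), Q₄=(1,0,0,0,0,0,0), Q₅=(0,1,1,0,0,1,0), Q₆=(0,1,0,0,0,0,0), Q₇=(0,0,1,0,0,0,0), Q₈=(0,0,0,0,0,0,0) in ℝ⁷. A point M = (x₁, x₂, x₃, x₁₂, x₁₃, x₂₃, x₁₂₃) belongs to the convex hull of {Q₁, …, Q₈} if and only if max{0, x₁₂ + x₁₃ − x₁, x₁₂ + x₂₃ − x₂, x₁₃ + x₂₃ − x₃} ≤ x₁₂₃ and x₁₂₃ ≤ min{x₁₂, x₁₃, x₂₃, 1 − x₁ − x₂ − x₃ + x₁₂ + x₁₃ + x₂₃}. -/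
import Mathlib

section aux

variable {α : Type*}

lemma ev7_0 (a b c d e f g : α) : ![a,b,c,d,e,f,g] 0 = a := rfl
lemma ev7_1 (a b c d e f g : α) : ![a,b,c,d,e,f,g] 1 = b := rfl
lemma ev7_2 (a b c d e f g : α) : ![a,b,c,d,e,f,g] 2 = c := rfl
lemma ev7_3 (a b c d e f g : α) : ![a,b,c,d,e,f,g] 3 = d := rfl
lemma ev7_4 (a b c d e f g : α) : ![a,b,c,d,e,f,g] 4 = e := rfl
lemma ev7_5 (a b c d e f g : α) : ![a,b,c,d,e,f,g] 5 = f := rfl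
lemma ev7_6 (a b c d e f g : α) : ![a,b,c,d,e,f,g] 6 = g := rfl

lemma ev8_0 (a b c d e f g h : α) : ![a,b,c,d,e,f,g,h] 0 = a := rfl
lemma ev8_1 (a b c d e f g h : α) : ![a,b,c,d,e,f,g,h] 1 = b := rfl
lemma ev8_2 (a b c d e f g h : α) : ![a,b,c,d,e,f,g,h] 2 = c := rfl
lemma ev8_3 (a b c d e f g h : α) : ![a,b,c,d,e,f,g,h] 3 = d := rfl
lemma ev8_4 (a b c d e f g h : α) : ![a,b,c,d,e,f,g,h] 4 = e := rfl
lemma ev8_5 (a b c d e f g h : α) : ![a,b,c,d,e,f,g,h] 5 = f := rfl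
lemma ev8_6 (a b c d e f g h : α) : ![a,b,c,d,e,f,g,h] 6 = g := rfl
lemma ev8_7 (a b c d e f g h : α) : ![a,b,c,d,e,f,g,h] 7 = h := rfl

lemma mv7_0 (a b c d e f g : α) (h : (0:ℕ) < 7) : ![a,b,c,d,e,f,g] ⟨0,h⟩ = a := rfl
lemma mv7_1 (a b c d e f g : α) (h : (1:ℕ) < 7) : ![a,b,c,d,e,f,g] ⟨1,h⟩ = b := rfl
lemma mv7_2 (a b c d e f g : α) (h : (2:ℕ) < 7) : ![a,b,c,d,e,f,g] ⟨2,h⟩ = c := rfl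
lemma mv7_3 (a b c d e f g : α) (h : (3:ℕ) < 7) : ![a,b,c,d,e,f,g] ⟨3,h⟩ = d := rfl
lemma mv7_4 (a b c d e f g : α) (h : (4:ℕ) < 7) : ![a,b,c,d,e,f,g] ⟨4,h⟩ = e := rfl
lemma mv7_5 (a b c d e f g : α) (h : (5:ℕ) < 7) : ![a,b,c,d,e,f,g] ⟨5,h⟩ = f := rfl
lemma mv7_6 (a b c d e f g : α) (h : (6:ℕ) < 7) : ![a,b,c,d,e,f,g] ⟨6,h⟩ = g := rfl

lemma mv8_0 (a b c d e f g h : α) (hh : (0:ℕ) < 8) : ![a,b,c,d,e,f,g,h] ⟨0,hh⟩ = a := rfl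
lemma mv8_1 (a b c d e f g h : α) (hh : (1:ℕ) < 8) : ![a,b,c,d,e,f,g,h] ⟨1,hh⟩ = b := rfl
lemma mv8_2 (a b c d e f g h : α) (hh : (2:ℕ) < 8) : ![a,b,c,d,e,f,g,h] ⟨2,hh⟩ = c := rfl
lemma mv8_3 (a b c d e f g h : α) (hh : (3:ℕ) < 8) : ![a,b,c,d,e,f,g,h] ⟨3,hh⟩ = d := rfl
lemma mv8_4 (a b c d e f g h : α) (hh : (4:ℕ) < 8) : ![a,b,c,d,e,f,g,h] ⟨4,hh⟩ = e := rfl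
lemma mv8_5 (a b c d e f g h : α) (hh : (5:ℕ) < 8) : ![a,b,c,d,e,f,g,h] ⟨5,hh⟩ = f := rfl
lemma mv8_6 (a b c d e f g h : α) (hh : (6:ℕ) < 8) : ![a,b,c,d,e,f,g,h] ⟨6,hh⟩ = g := rfl
lemma mv8_7 (a b c d e f g h : α) (hh : (7:ℕ) < 8) : ![a,b,c,d,e,f,g,h] ⟨7,hh⟩ = h := rfl

end aux

/-- The convex region cut out by the eight linear inequalities. -/
def stmt3T : Set (Fin 7 → ℝ) :=
  {v | 0 ≤ v 6 ∧ v 3 + v 4 - v 0 ≤ v 6 ∧ v 3 + v 5 - v 1 ≤ v 6 ∧ v 4 + v 5 - v 2 ≤ v 6 ∧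
    v 6 ≤ v 3 ∧ v 6 ≤ v 4 ∧ v 6 ≤ v 5 ∧ v 6 ≤ 1 - v 0 - v 1 - v 2 + v 3 + v 4 + v 5}

set_option maxHeartbeats 1000000 in
lemma stmt3T_convex : Convex ℝ stmt3T := by
  intro u hu w hw a b ha hb hab
  obtain ⟨h1, h2, h3, h4, h5, h6, h7, h8⟩ := hu
  obtain ⟨g1, g2, g3, g4, g5, g6, g7, g8⟩ := hw
  have e : ∀ i, (a • u + b • w) i = a * u i + b * w i := by intro i; simp
  refine ⟨?_, ?_, ?_, ?_, ?_, ?_, ?_, ?_⟩ <;> simp only [e]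
  · nlinarith [mul_le_mul_of_nonneg_left h1 ha, mul_le_mul_of_nonneg_left g1 hb]
  · nlinarith [mul_le_mul_of_nonneg_left h2 ha, mul_le_mul_of_nonneg_left g2 hb]
  · nlinarith [mul_le_mul_of_nonneg_left h3 ha, mul_le_mul_of_nonneg_left g3 hb]
  · nlinarith [mul_le_mul_of_nonneg_left h4 ha, mul_le_mul_of_nonneg_left g4 hb]
  · nlinarith [mul_le_mul_of_nonneg_left h5 ha, mul_le_mul_of_nonneg_left g5 hb]
  · nlinarith [mul_le_mul_of_nonneg_left h6 ha, mul_le_mul_of_nonneg_left g6 hb]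
  · nlinarith [mul_le_mul_of_nonneg_left h7 ha, mul_le_mul_of_nonneg_left g7 hb]
  · nlinarith [mul_le_mul_of_nonneg_left h8 ha, mul_le_mul_of_nonneg_left g8 hb]

set_option maxHeartbeats 1000000 in
theorem stmt3 (x₁ x₂ x₃ x₁₂ x₁₃ x₂₃ x₁₂₃ : ℝ) :
    (![x₁, x₂, x₃, x₁₂, x₁₃, x₂₃, x₁₂₃]) ∈ convexHull ℝ
      ({![1, 1, 1, 1, 1, 1, 1], ![1, 1, 0, 1, 0, 0, 0], ![1, 0, 1, 0, 1, 0, 0],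
        ![1, 0, 0, 0, 0, 0, 0], ![0, 1, 1, 0, 0, 1, 0], ![0, 1, 0, 0, 0, 0, 0],
        ![0, 0, 1, 0, 0, 0, 0], ![0, 0, 0, 0, 0, 0, 0]} : Set (Fin 7 → ℝ)) ↔
      max (max (max 0 (x₁₂ + x₁₃ - x₁)) (x₁₂ + x₂₃ - x₂)) (x₁₃ + x₂₃ - x₃) ≤ x₁₂₃ ∧
        x₁₂₃ ≤ min (min (min x₁₂ x₁₃) x₂₃) (1 - x₁ - x₂ - x₃ + x₁₂ + x₁₃ + x₂₃) := by
  constructor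
  · intro hM
    have hsub : convexHull ℝ
        ({![1, 1, 1, 1, 1, 1, 1], ![1, 1, 0, 1, 0, 0, 0], ![1, 0, 1, 0, 1, 0, 0],
          ![1, 0, 0, 0, 0, 0, 0], ![0, 1, 1, 0, 0, 1, 0], ![0, 1, 0, 0, 0, 0, 0],
          ![0, 0, 1, 0, 0, 0, 0], ![0, 0, 0, 0, 0, 0, 0]} : Set (Fin 7 → ℝ)) ⊆ stmt3T := by
      apply convexHull_min _ stmt3T_convex
      intro v hv
      simp only [Set.mem_insert_iff, Set.mem_singleton_iff] at hv
      rcases hv with h|h|h|h|h|h|h|h <;> subst h <;>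
        simp only [stmt3T, Set.mem_setOf_eq, ev7_0, ev7_1, ev7_2, ev7_3, ev7_4, ev7_5, ev7_6, mv7_0, mv7_1, mv7_2, mv7_3, mv7_4, mv7_5, mv7_6] <;>
        norm_num
    obtain ⟨h1, h2, h3, h4, h5, h6, h7, h8⟩ := hsub hM
    simp only [ev7_0, ev7_1, ev7_2, ev7_3, ev7_4, ev7_5, ev7_6, mv7_0, mv7_1, mv7_2, mv7_3, mv7_4, mv7_5, mv7_6] at h1 h2 h3 h4 h5 h6 h7 h8
    exact ⟨by simp only [max_le_iff]; exact ⟨⟨⟨h1, h2⟩, h3⟩, h4⟩,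
      by simp only [le_min_iff]; exact ⟨⟨⟨h5, h6⟩, h7⟩, h8⟩⟩
  · rintro ⟨hmax, hmin⟩
    simp only [max_le_iff] at hmax
    simp only [le_min_iff] at hmin
    obtain ⟨⟨⟨h1, h2⟩, h3⟩, h4⟩ := hmax
    obtain ⟨⟨⟨h5, h6⟩, h7⟩, h8⟩ := hmin
    set z : Fin 8 → (Fin 7 → ℝ) :=
      ![![1, 1, 1, 1, 1, 1, 1], ![1, 1, 0, 1, 0, 0, 0], ![1, 0, 1, 0, 1, 0, 0],
        ![1, 0, 0, 0, 0, 0, 0], ![0, 1, 1, 0, 0, 1, 0], ![0, 1, 0, 0, 0, 0, 0],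
        ![0, 0, 1, 0, 0, 0, 0], ![0, 0, 0, 0, 0, 0, 0]] with hz
    set w : Fin 8 → ℝ :=
      ![x₁₂₃, x₁₂ - x₁₂₃, x₁₃ - x₁₂₃, x₁ - x₁₂ - x₁₃ + x₁₂₃,
        x₂₃ - x₁₂₃, x₂ - x₁₂ - x₂₃ + x₁₂₃, x₃ - x₁₃ - x₂₃ + x₁₂₃,
        1 - x₁ - x₂ - x₃ + x₁₂ + x₁₃ + x₂₃ - x₁₂₃] with hw
    have hwnn : ∀ i ∈ Finset.univ, 0 ≤ w i := by
      intro i _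
      fin_cases i <;>
        simp only [hw, ev8_0, ev8_1, ev8_2, ev8_3, ev8_4, ev8_5, ev8_6, ev8_7, mv8_0, mv8_1, mv8_2, mv8_3, mv8_4, mv8_5, mv8_6, mv8_7] <;> linarith
    have hwsum : ∑ i, w i = 1 := by
      rw [Fin.sum_univ_eight]
      simp only [hw, ev8_0, ev8_1, ev8_2, ev8_3, ev8_4, ev8_5, ev8_6, ev8_7, mv8_0, mv8_1, mv8_2, mv8_3, mv8_4, mv8_5, mv8_6, mv8_7]
      ring
    have hmem : ∀ i ∈ Finset.univ, z i ∈
        ({![1, 1, 1, 1, 1, 1, 1], ![1, 1, 0, 1, 0, 0, 0], ![1, 0, 1, 0, 1, 0, 0],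
          ![1, 0, 0, 0, 0, 0, 0], ![0, 1, 1, 0, 0, 1, 0], ![0, 1, 0, 0, 0, 0, 0],
          ![0, 0, 1, 0, 0, 0, 0], ![0, 0, 0, 0, 0, 0, 0]} : Set (Fin 7 → ℝ)) := by
      intro i _
      fin_cases i <;>
        simp only [hz, ev8_0, ev8_1, ev8_2, ev8_3, ev8_4, ev8_5, ev8_6, ev8_7, mv8_0, mv8_1, mv8_2, mv8_3, mv8_4, mv8_5, mv8_6, mv8_7,
          Set.mem_insert_iff, Set.mem_singleton_iff] <;> tauto
    have hcm := Finset.centerMass_mem_convexHull Finset.univ hwnn (by rw [hwsum]; norm_num) hmem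
    have heq : Finset.univ.centerMass w z = ![x₁, x₂, x₃, x₁₂, x₁₃, x₂₃, x₁₂₃] := by
      rw [Finset.centerMass, hwsum, inv_one, one_smul]
      rw [Fin.sum_univ_eight]
      funext j
      simp only [hw, hz, ev8_0, ev8_1, ev8_2, ev8_3, ev8_4, ev8_5, ev8_6, ev8_7, mv8_0, mv8_1, mv8_2, mv8_3, mv8_4, mv8_5, mv8_6, mv8_7,
        Pi.add_apply, Pi.smul_apply, smul_eq_mul]
      fin_cases j <;>
        simp only [ev7_0, ev7_1, ev7_2, ev7_3, ev7_4, ev7_5, ev7_6, mv7_0, mv7_1, mv7_2, mv7_3, mv7_4, mv7_5, mv7_6] <;> ring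
    rwa [heq] at hcm
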